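/- In a directed acyclic graph with edge weights w such that the in-weights at each node sum to at most 1, under the linear threshold model with uniform random thresholds, the activation probability satisfies the linear recurrence ap(x) = Σ_{u ∈ N_in(x)} w_{ux} · ap(u) for every non-seed node x, with ap(s) = 1 for seed nodes s. -/

import Mathlib

open MeasureTheory

/-- There is a walk of length `n` (number of edges) from `u` to `w` along relation `E`. -/
inductive PathLen {V : Type*} (E : V → V → Prop) : V → V → ℕ → Prop
  | refl (v : V) : PathLen E v v 0
  | tail {u v w : V} {n : ℕ} : PathLen E u v n → E v w → PathLen E u w (n + 1)

/-- One step of the deterministic linear threshold diffusion with weights `w`,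
thresholds `θ`, and current active set `A`. -/
noncomputable def ltStep {V : Type*} [Fintype V] (w : V → V → ℝ) (θ : V → ℝ)
    (A : Set V) : Set V :=
  A ∪ {v | θ v ≤ ∑ u : V, A.indicator (fun u => w u v) u}

/-- The activation probability of `x` in the LT model with seed set `S`, where each
vertex's threshold is drawn independently and uniformly from `[0,1]`. -/
noncomputable def ap {V : Type*} [Fintype V] (w : V → V → ℝ) (S : Set V) (x : V) : ℝ :=
  ((Measure.pi fun _ : V => volume.restrict (Set.Icc (0 : ℝ) 1))
    {θ : V → ℝ | x ∈ ⋃ t : ℕ, (ltStep w θ)^[t] S}).toReal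

section Aux

variable {V : Type*} [Fintype V] (w : V → V → ℝ) (S : Set V)

def actSet (θ : V → ℝ) : Set V := ⋃ t : ℕ, (ltStep w θ)^[t] S

lemma iter_subset_succ (θ : V → ℝ) (t : ℕ) :
    (ltStep w θ)^[t] S ⊆ (ltStep w θ)^[t + 1] S := by
  rw [Function.iterate_succ_apply']
  exact Set.subset_union_left

lemma iter_subset (θ : V → ℝ) {t t' : ℕ} (h : t ≤ t') :
    (ltStep w θ)^[t] S ⊆ (ltStep w θ)^[t'] S := by
  induction t', h using Nat.le_induction with
  | base => exact subset_rfl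
  | succ n hn ih => exact ih.trans (iter_subset_succ w S θ n)

lemma exists_stab (θ : V → ℝ) : ∃ T : ℕ, actSet w S θ = (ltStep w θ)^[T] S := by
  classical
  set g : V → ℕ := fun u => if h : u ∈ actSet w S θ then (Set.mem_iUnion.1 h).choose else 0
    with hg
  refine ⟨Finset.univ.sup g, Set.Subset.antisymm ?_ (Set.subset_iUnion (fun t => (ltStep w θ)^[t] S) _)⟩
  intro u hu
  have h1 : u ∈ (ltStep w θ)^[g u] S := by
    simp only [hg, dif_pos hu]
    exact (Set.mem_iUnion.1 hu).choose_spec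
  exact iter_subset w S θ (Finset.le_sup (Finset.mem_univ u)) h1

lemma sum_indicator_mono (hw : ∀ u v, 0 ≤ w u v) {A B : Set V} (hAB : A ⊆ B) (x : V) :
    (∑ u, A.indicator (fun u => w u x) u) ≤ ∑ u, B.indicator (fun u => w u x) u :=
  Finset.sum_le_sum fun u _ =>
    Set.indicator_le_indicator_of_subset hAB (fun u => hw u x) u

lemma mem_actSet_iff (hw : ∀ u v, 0 ≤ w u v) (θ : V → ℝ) (x : V) :
    x ∈ actSet w S θ ↔ x ∈ S ∨ θ x ≤ ∑ u, (actSet w S θ).indicator (fun u => w u x) u := by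
  constructor
  · intro hx
    obtain ⟨t, ht⟩ := Set.mem_iUnion.1 hx
    clear hx
    induction t with
    | zero => exact Or.inl ht
    | succ n ih =>
      rw [Function.iterate_succ_apply'] at ht
      rcases ht with h | h
      · exact ih h
      · refine Or.inr (le_trans h (sum_indicator_mono w hw ?_ x))
        exact Set.subset_iUnion (fun t => (ltStep w θ)^[t] S) n
  · rintro (hx | hx)
    · exact Set.mem_iUnion.2 ⟨0, hx⟩
    · obtain ⟨T, hT⟩ := exists_stab w S θ
      refine Set.mem_iUnion.2 ⟨T + 1, ?_⟩
      rw [Function.iterate_succ_apply']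
      refine Set.mem_union_right _ ?_
      show θ x ≤ ∑ u, ((ltStep w θ)^[T] S).indicator (fun u => w u x) u
      rw [← hT]
      exact hx

lemma measurableSet_iter (t : ℕ) : ∀ u : V,
    MeasurableSet {θ : V → ℝ | u ∈ (ltStep w θ)^[t] S} := by
  induction t with
  | zero => intro u; by_cases h : u ∈ S <;> simp [h]
  | succ n ih =>
    intro u
    have hsum : ∀ θ : V → ℝ,
        (∑ v, ((ltStep w θ)^[n] S).indicator (fun v => w v u) v)
          = ∑ v, ({θ' : V → ℝ | v ∈ (ltStep w θ')^[n] S}).indicator (fun _ => w v u) θ := by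
      intro θ
      refine Finset.sum_congr rfl fun v _ => ?_
      by_cases h : v ∈ (ltStep w θ)^[n] S
      · rw [Set.indicator_of_mem h]
        exact (Set.indicator_of_mem (show θ ∈ {θ' : V → ℝ | v ∈ (ltStep w θ')^[n] S} from h) (fun _ => w v u)).symm
      · rw [Set.indicator_of_notMem h]
        exact (Set.indicator_of_notMem
          (show θ ∉ {θ' : V → ℝ | v ∈ (ltStep w θ')^[n] S} from h) (fun _ => w v u)).symm
    have hs : {θ : V → ℝ | u ∈ (ltStep w θ)^[n + 1] S}
        = {θ : V → ℝ | u ∈ (ltStep w θ)^[n] S}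
          ∪ {θ : V → ℝ |
              θ u ≤ ∑ v, ({θ' : V → ℝ | v ∈ (ltStep w θ')^[n] S}).indicator (fun _ => w v u) θ} := by
      ext θ
      simp only [Set.mem_setOf_eq, Set.mem_union, Function.iterate_succ_apply', ltStep,
        Set.mem_union, Set.mem_setOf_eq, hsum θ]
    rw [hs]
    refine (ih u).union ?_
    refine measurableSet_le (measurable_pi_apply u) ?_
    exact Finset.measurable_sum _ fun v _ => Measurable.indicator measurable_const (ih v)

lemma measurableSet_act (u : V) : MeasurableSet {θ : V → ℝ | u ∈ actSet w S θ} := by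
  have : {θ : V → ℝ | u ∈ actSet w S θ}
      = ⋃ t : ℕ, {θ : V → ℝ | u ∈ (ltStep w θ)^[t] S} := by
    ext θ; simp [actSet, Set.mem_iUnion]
  rw [this]
  exact MeasurableSet.iUnion fun t => measurableSet_iter w S t u

lemma local_iter (x : V) (θ θ' : V → ℝ) (hθ : ∀ v, v ≠ x → θ v = θ' v) :
    ∀ (t : ℕ) (u : V), (∀ n, ¬ PathLen (fun a b => w a b ≠ 0) x u n) →
      (u ∈ (ltStep w θ)^[t] S ↔ u ∈ (ltStep w θ')^[t] S) := by
  classical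
  intro t
  induction t with
  | zero => intro u _; exact Iff.rfl
  | succ n ih =>
    intro u hu
    have hux : u ≠ x := by
      intro h; subst h; exact hu 0 (PathLen.refl u)
    have hsum : (∑ v, ((ltStep w θ)^[n] S).indicator (fun v => w v u) v)
        = ∑ v, ((ltStep w θ')^[n] S).indicator (fun v => w v u) v := by
      refine Finset.sum_congr rfl fun v _ => ?_
      by_cases hv : w v u = 0
      · rw [Set.indicator_apply, Set.indicator_apply]
        split_ifs <;> simp [hv]
      · have hvp : ∀ n', ¬ PathLen (fun a b => w a b ≠ 0) x v n' :=
          fun n' hp => hu (n' + 1) (hp.tail hv)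
        have hiff := ih v hvp
        by_cases h1 : v ∈ (ltStep w θ)^[n] S
        · rw [Set.indicator_of_mem h1, Set.indicator_of_mem (hiff.1 h1)]
        · rw [Set.indicator_of_notMem h1, Set.indicator_of_notMem (fun hh => h1 (hiff.2 hh))]
    simp only [Function.iterate_succ_apply', ltStep, Set.mem_union, Set.mem_setOf_eq,
      hsum, hθ u hux, ih u hu]

lemma local_act (x : V) (θ θ' : V → ℝ) (hθ : ∀ v, v ≠ x → θ v = θ' v) (u : V)
    (hu : ∀ n, ¬ PathLen (fun a b => w a b ≠ 0) x u n) :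
    u ∈ actSet w S θ ↔ u ∈ actSet w S θ' := by
  simp only [actSet, Set.mem_iUnion]
  exact exists_congr fun t => local_iter w S x θ θ' hθ t u hu

end Aux

lemma ap_seed {V : Type*} [Fintype V] (w : V → V → ℝ) (S : Set V) {s : V} (hs : s ∈ S) :
    ap w S s = 1 := by
  haveI : IsProbabilityMeasure (volume.restrict (Set.Icc (0 : ℝ) 1)) :=
    ⟨by simp [Real.volume_Icc]⟩
  have h : {θ : V → ℝ | s ∈ ⋃ t : ℕ, (ltStep w θ)^[t] S} = Set.univ := by
    ext θ
    simp only [Set.mem_setOf_eq, Set.mem_univ, iff_true, Set.mem_iUnion]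
    exact ⟨0, hs⟩
  rw [ap, h, measure_univ, ENNReal.toReal_one]

lemma ap_rec {V : Type*} [Fintype V] (w : V → V → ℝ) (S : Set V)
    (hw : ∀ u v, 0 ≤ w u v) (hw1 : ∀ v, (∑ u, w u v) ≤ 1)
    (hdag : ∀ (x : V) (n : ℕ), 0 < n → ¬ PathLen (fun u v => w u v ≠ 0) x x n)
    {x : V} (hx : x ∉ S) : ap w S x = ∑ u, w u x * ap w S u := by
  classical
  haveI hνP : IsProbabilityMeasure (volume.restrict (Set.Icc (0 : ℝ) 1)) :=
    ⟨by simp [Real.volume_Icc]⟩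
  set ν : Measure ℝ := volume.restrict (Set.Icc (0 : ℝ) 1) with hν
  set μ : Measure (V → ℝ) := Measure.pi fun _ : V => ν with hμ
  set μ' : Measure ({v : V // ¬ v = x} → ℝ) := Measure.pi fun _ => ν with hμ'
  haveI : IsProbabilityMeasure μ := by rw [hμ]; infer_instance
  haveI : IsProbabilityMeasure μ' := by rw [hμ']; infer_instance
  haveI : Unique {v : V // v = x} := ⟨⟨⟨x, rfl⟩⟩, fun a => Subtype.ext a.2⟩
  have hnopath : ∀ u : V, w u x ≠ 0 → ∀ n, ¬ PathLen (fun a b => w a b ≠ 0) x u n :=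
    fun u hu n hp => hdag x (n + 1) (Nat.succ_pos n) (hp.tail hu)
  set ep : ℝ × ({v : V // ¬ v = x} → ℝ) → (V → ℝ) :=
    fun p v => if h : v = x then p.1 else p.2 ⟨v, h⟩ with hep
  have hepx : ∀ p, ep p x = p.1 := fun p => by simp [hep]
  have hepne : ∀ p v (h : ¬ v = x), ep p v = p.2 ⟨v, h⟩ := fun p v h => by simp [hep, h]
  set g : (V → ℝ) ≃ᵐ ℝ × ({v : V // ¬ v = x} → ℝ) :=
    (MeasurableEquiv.piEquivPiSubtypeProd (fun _ : V => ℝ) (fun v => v = x)).trans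
      ((MeasurableEquiv.funUnique {v : V // v = x} ℝ).prodCongr (MeasurableEquiv.refl _)) with hg
  have hgp : MeasurePreserving g μ (ν.prod μ') := by
    have h1 := measurePreserving_piEquivPiSubtypeProd (fun _ : V => ν) (fun v => v = x)
    refine MeasurePreserving.comp
      (g := Prod.map (⇑(MeasurableEquiv.funUnique {v : V // v = x} ℝ)) id) ?_ h1
    have h2 := (measurePreserving_funUnique ν ({v : V // v = x})).prod
      (MeasurePreserving.id μ')
    convert h2 using 3
  have hgsymm : ∀ p, g.symm p = ep p := fun p => rfl
  have hgθ2 : ∀ (θ : V → ℝ) v (h : ¬ v = x), (g θ).2 ⟨v, h⟩ = θ v := fun θ v h => rfl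
  set C : V → Set ({v : V // ¬ v = x} → ℝ) :=
    fun u => {c | u ∈ actSet w S (ep (0, c))} with hC
  have hep0meas : Measurable (fun c : {v : V // ¬ v = x} → ℝ => ep (0, c)) := by
    refine measurable_pi_lambda _ fun v => ?_
    by_cases h : v = x
    · simpa [hep, h] using measurable_const
    · simpa [hep, h] using measurable_pi_apply (⟨v, h⟩ : {v : V // ¬ v = x})
  have hCmeas : ∀ u, MeasurableSet (C u) := fun u => hep0meas (measurableSet_act w S u)
  set F : ({v : V // ¬ v = x} → ℝ) → ℝ :=
    fun b => ∑ u, (C u).indicator (fun _ => w u x) b with hF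
  have hFmeas : Measurable F :=
    Finset.measurable_sum _ fun u _ => Measurable.indicator measurable_const (hCmeas u)
  have hF0 : ∀ b, 0 ≤ F b := fun b =>
    Finset.sum_nonneg fun u _ => Set.indicator_nonneg (fun _ _ => hw u x) b
  have hF1 : ∀ b, F b ≤ 1 := fun b =>
    le_trans (Finset.sum_le_sum fun u _ => Set.indicator_le_self' (fun _ _ => hw u x) b) (hw1 x)
  have hsumF : ∀ p : ℝ × ({v : V // ¬ v = x} → ℝ),
      (∑ u, (actSet w S (ep p)).indicator (fun u => w u x) u) = F p.2 := by
    intro p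
    refine Finset.sum_congr rfl fun u _ => ?_
    by_cases hu : w u x = 0
    · rw [Set.indicator_apply, Set.indicator_apply]
      split_ifs <;> simp [hu]
    · have hloc := local_act w S x (ep p) (ep (0, p.2))
        (fun v hv => by rw [hepne p v hv, hepne (0, p.2) v hv]) u (hnopath u hu)
      by_cases h1 : u ∈ actSet w S (ep p)
      · rw [Set.indicator_of_mem h1, Set.indicator_of_mem (show p.2 ∈ C u from hloc.1 h1)]
      · rw [Set.indicator_of_notMem h1,
          Set.indicator_of_notMem (show p.2 ∉ C u from fun hh => h1 (hloc.2 hh))]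
  have hpre : g.symm ⁻¹' {θ : V → ℝ | x ∈ actSet w S θ}
      = {p : ℝ × ({v : V // ¬ v = x} → ℝ) | p.1 ≤ F p.2} := by
    ext p
    simp only [Set.mem_preimage, Set.mem_setOf_eq, hgsymm p]
    rw [mem_actSet_iff w S hw (ep p) x, hsumF p, hepx p]
    simp [hx]
  have hAmeas : MeasurableSet {θ : V → ℝ | x ∈ actSet w S θ} := measurableSet_act w S x
  have hBmeas : MeasurableSet {p : ℝ × ({v : V // ¬ v = x} → ℝ) | p.1 ≤ F p.2} :=
    measurableSet_le measurable_fst (hFmeas.comp measurable_snd)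
  have h1 : μ {θ : V → ℝ | x ∈ actSet w S θ}
      = (ν.prod μ') {p : ℝ × ({v : V // ¬ v = x} → ℝ) | p.1 ≤ F p.2} := by
    rw [← hpre]
    exact ((MeasurePreserving.symm g hgp).measure_preimage hAmeas.nullMeasurableSet).symm
  have h2 : (ν.prod μ') {p : ℝ × ({v : V // ¬ v = x} → ℝ) | p.1 ≤ F p.2}
      = ∫⁻ b, ENNReal.ofReal (F b) ∂μ' := by
    rw [Measure.prod_apply_symm hBmeas]
    refine lintegral_congr fun b => ?_
    have hset : ((fun r : ℝ => (r, b)) ⁻¹' {p : ℝ × ({v : V // ¬ v = x} → ℝ) | p.1 ≤ F p.2})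
        = Set.Iic (F b) := rfl
    rw [hset, hν, Measure.restrict_apply measurableSet_Iic]
    have hinter : Set.Iic (F b) ∩ Set.Icc (0 : ℝ) 1 = Set.Icc 0 (F b) := by
      ext r
      simp only [Set.mem_inter_iff, Set.mem_Iic, Set.mem_Icc]
      exact ⟨fun h => ⟨h.2.1, h.1⟩, fun h => ⟨h.2, h.1, h.2.trans (hF1 b)⟩⟩
    rw [hinter, Real.volume_Icc, sub_zero]
  have hIntF : Integrable F μ' :=
    integrable_finset_sum _ fun u _ => (integrable_const (w u x)).indicator (hCmeas u)
  have h3 : ∫⁻ b, ENNReal.ofReal (F b) ∂μ' = ENNReal.ofReal (∫ b, F b ∂μ') :=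
    (ofReal_integral_eq_lintegral_ofReal hIntF (Filter.Eventually.of_forall hF0)).symm
  have h4 : ∫ b, F b ∂μ' = ∑ u, w u x * (μ' (C u)).toReal := by
    rw [hF]
    rw [integral_finset_sum _ fun u _ => (integrable_const (w u x)).indicator (hCmeas u)]
    refine Finset.sum_congr rfl fun u _ => ?_
    rw [integral_indicator_const (w u x) (hCmeas u), smul_eq_mul, mul_comm, measureReal_def]
  have h5 : ∀ u, w u x ≠ 0 → (μ' (C u)).toReal = ap w S u := by
    intro u hu
    have hsets : {θ : V → ℝ | u ∈ actSet w S θ} = g ⁻¹' (Prod.snd ⁻¹' C u) := by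
      ext θ
      simp only [Set.mem_setOf_eq, Set.mem_preimage, hC]
      exact local_act w S x θ (ep (0, (g θ).2))
        (fun v hv => by rw [hepne (0, (g θ).2) v hv]; exact (hgθ2 θ v hv).symm) u (hnopath u hu)
    have hmu : μ {θ : V → ℝ | u ∈ actSet w S θ} = μ' (C u) := by
      rw [hsets, hgp.measure_preimage ((measurable_snd (hCmeas u)).nullMeasurableSet),
        ← Measure.map_apply measurable_snd (hCmeas u), Measure.map_snd_prod, measure_univ,
        one_smul]
    have hap : ap w S u = (μ {θ : V → ℝ | u ∈ actSet w S θ}).toReal := rfl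
    rw [hap, hmu]
  have hfinal : ap w S x = (μ {θ : V → ℝ | x ∈ actSet w S θ}).toReal := rfl
  rw [hfinal, h1, h2, h3, ENNReal.toReal_ofReal (integral_nonneg hF0), h4]
  refine Finset.sum_congr rfl fun u _ => ?_
  by_cases hu : w u x = 0
  · rw [hu, zero_mul, zero_mul]
  · rw [h5 u hu]


/-- In a DAG with in-weights summing to at most 1, LT activation probabilities satisfy
the linear recurrence `ap(x) = ∑_u w_{ux} · ap(u)` for non-seed nodes `x`, with
`ap(s) = 1` for seeds. -/
theorem stmt11 {V : Type*} [Fintype V] (w : V → V → ℝ) (S : Set V)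
    (hw : ∀ u v, 0 ≤ w u v) (hw1 : ∀ v, (∑ u, w u v) ≤ 1)
    (hdag : ∀ (x : V) (n : ℕ), 0 < n → ¬ PathLen (fun u v => w u v ≠ 0) x x n) :
    (∀ s ∈ S, ap w S s = 1) ∧
    (∀ x, x ∉ S → ap w S x = ∑ u, w u x * ap w S u) := by
  exact ⟨fun s hs => ap_seed w S hs, fun x hx => ap_rec w S hw hw1 hdag hx⟩
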